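/- Let A be a nonempty finite alphabet, μ a probability distribution on A, and fix n > 1. Let L_n = (1/n) Σ_{u : Fin n → A} μ^n(u) · (1/|S_u|) Σ_i i · α_i(|S_u|) · 2^i be the expected number of secret bits per covertext letter transmitted by the stegosystem St_n(A), where |S_u| = n!/∏_{a∈A} ν_u(a)! and α_i(N) are the binary digits of N. Then (1 − (n(n−1)/2) · 2^{−H∞(μ)}) · (log₂(n!) − 2)/n ≤ L_n ≤ log₂(n!)/n, where H∞(μ) = min_{a : μ(a)>0} (− log₂ μ(a)) is the min-entropy of μ. In particular, for fixed n, as H∞(μ) → ∞ the rate L_n is confined to the interval [(log₂(n!) − 2)/n, log₂(n!)/n] in the limit, i.e., L_n tends to (log₂(n!) − O(1))/n. -/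

import Mathlib

/-- ν_u(a): the number of occurrences of the letter `a` in the word `u`. -/
def freq {A : Type*} [DecidableEq A] {n : ℕ} (u : Fin n → A) (a : A) : ℕ :=
  (Finset.univ.filter fun i => u i = a).card

/-- |S_u| = n! / ∏ₐ ν_u(a)! : the size of the type class of `u`. -/
def typeClassCard {A : Type*} [Fintype A] [DecidableEq A] {n : ℕ} (u : Fin n → A) : ℕ :=
  n.factorial / ∏ a : A, (freq u a).factorial

/-- α_i(N): the i-th binary digit of `N`. -/
def binDigit (N i : ℕ) : ℕ := N / 2 ^ i % 2

/-- E(N) = (1/N) Σ_i i · α_i(N) · 2^i : the expected number of secret bits encoded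
into one covertext block whose type class has size `N`. -/
noncomputable def expBits (N : ℕ) : ℝ :=
  (1 / (N : ℝ)) * ∑ i ∈ Finset.range (Nat.log 2 N + 1), (i : ℝ) * (binDigit N i : ℝ) * 2 ^ i

/-- L_n: the expected number of secret bits per covertext letter transmitted by
the stegosystem St_n(A). -/
noncomputable def rateL (A : Type*) [Fintype A] [DecidableEq A] (μ : PMF A) (n : ℕ) : ℝ :=
  (1 / (n : ℝ)) * ∑ u : Fin n → A, (∏ i, (μ (u i)).toReal) * expBits (typeClassCard u)

open scoped ENNReal

lemma sum_binDigit_aux (N k : ℕ) :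
    ∑ i ∈ Finset.range k, binDigit N i * 2 ^ i = N % 2 ^ k := by
  induction k with
  | zero => simp [Nat.mod_one]
  | succ k ih =>
    rw [Finset.sum_range_succ, ih, pow_succ, Nat.mod_mul, binDigit]
    ring

lemma sum_binDigit (N : ℕ) :
    ∑ i ∈ Finset.range (Nat.log 2 N + 1), binDigit N i * 2 ^ i = N := by
  rw [sum_binDigit_aux, Nat.mod_eq_of_lt (Nat.lt_pow_succ_log_self (by norm_num) N)]

lemma binDigit_le_one (N i : ℕ) : binDigit N i ≤ 1 :=
  Nat.lt_succ_iff.mp (Nat.mod_lt _ (by norm_num))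

lemma binDigit_log (N : ℕ) (hN : 1 ≤ N) : binDigit N (Nat.log 2 N) = 1 := by
  have h1 : 1 ≤ N / 2 ^ Nat.log 2 N :=
    (Nat.one_le_div_iff (Nat.pow_pos (by norm_num : 0 < 2))).2
      (Nat.pow_log_le_self 2 (by omega))
  have h2 : N / 2 ^ Nat.log 2 N < 2 := by
    rw [Nat.div_lt_iff_lt_mul (Nat.pow_pos (by norm_num : 0 < 2)), mul_comm, ← pow_succ]
    exact Nat.lt_pow_succ_log_self (by norm_num) N
  unfold binDigit
  omega

lemma expBits_nonneg (N : ℕ) : 0 ≤ expBits N := by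
  apply mul_nonneg (by positivity)
  exact Finset.sum_nonneg fun i _ => by positivity

lemma natlog_le_logb (N : ℕ) (hN : 1 ≤ N) : (Nat.log 2 N : ℝ) ≤ Real.logb 2 N := by
  have h := Nat.pow_log_le_self 2 (show N ≠ 0 by omega)
  calc (Nat.log 2 N : ℝ) = Real.logb 2 ((2 : ℝ) ^ Nat.log 2 N) := by
        rw [Real.logb_pow, Real.logb_self_eq_one] <;> norm_num
      _ ≤ Real.logb 2 N := by
        apply Real.logb_le_logb_of_le (by norm_num) (by positivity)
        exact_mod_cast h

lemma logb_le_natlog (N : ℕ) (hN : 1 ≤ N) :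
    Real.logb 2 N ≤ (Nat.log 2 N : ℝ) + 1 := by
  have h := Nat.lt_pow_succ_log_self (show 1 < 2 by norm_num) N
  calc Real.logb 2 N ≤ Real.logb 2 ((2:ℝ) ^ (Nat.log 2 N + 1)) := by
        apply Real.logb_le_logb_of_le (by norm_num) (by exact_mod_cast hN)
        exact_mod_cast h.le
      _ = (Nat.log 2 N : ℝ) + 1 := by
        rw [Real.logb_pow, Real.logb_self_eq_one] <;> norm_num

lemma expBits_le (N : ℕ) (hN : 1 ≤ N) : expBits N ≤ Real.logb 2 N := by
  have hNpos : (0:ℝ) < N := by exact_mod_cast hN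
  have key : ∑ i ∈ Finset.range (Nat.log 2 N + 1), (i : ℝ) * (binDigit N i : ℝ) * 2 ^ i
      ≤ (Nat.log 2 N : ℝ) * N := by
    have : ((∑ i ∈ Finset.range (Nat.log 2 N + 1), binDigit N i * 2 ^ i : ℕ) : ℝ) = (N:ℝ) := by
      rw [sum_binDigit]
    push_cast at this
    rw [← this, Finset.mul_sum]
    apply Finset.sum_le_sum
    intro i hi
    have : (i:ℝ) ≤ (Nat.log 2 N : ℝ) := by
      have := Finset.mem_range.mp hi; exact_mod_cast Nat.lt_succ_iff.mp this
    have hb : (0:ℝ) ≤ (binDigit N i : ℝ) * 2 ^ i := by positivity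
    calc (i : ℝ) * (binDigit N i : ℝ) * 2 ^ i = (i:ℝ) * ((binDigit N i : ℝ) * 2 ^ i) := by ring
      _ ≤ (Nat.log 2 N : ℝ) * ((binDigit N i : ℝ) * 2 ^ i) := by
          apply mul_le_mul_of_nonneg_right this hb
  calc expBits N ≤ (1 / (N:ℝ)) * ((Nat.log 2 N : ℝ) * N) := by
        apply mul_le_mul_of_nonneg_left key (by positivity)
    _ = (Nat.log 2 N : ℝ) := by field_simp
    _ ≤ Real.logb 2 N := natlog_le_logb N hN

lemma geom_two (m : ℕ) : ∑ i ∈ Finset.range m, (2:ℝ) ^ i = 2 ^ m - 1 := by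
  rw [geom_sum_eq (by norm_num : (2:ℝ) ≠ 1)]
  norm_num

lemma aux_sum_le (k : ℕ) : ∑ i ∈ Finset.range k, ((k:ℝ) - 1 - i) * 2 ^ i ≤ 2 ^ k := by
  induction k with
  | zero => simp
  | succ k ih =>
    have e : ∀ i ∈ Finset.range (k+1),
        (((k:ℕ)+1 : ℝ) - 1 - i) * 2 ^ i = ((k:ℝ) - 1 - i) * 2 ^ i + 2 ^ i := by
      intros; push_cast; ring
    push_cast
    rw [Finset.sum_congr rfl e, Finset.sum_add_distrib, geom_two, Finset.sum_range_succ]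
    have h2 : ((k:ℝ) - 1 - k) * 2 ^ k = -(2 ^ k) := by ring
    rw [h2]
    have : (2:ℝ) ^ (k+1) = 2 * 2 ^ k := by ring
    push_cast
    linarith [ih]

lemma le_expBits (N : ℕ) (hN : 1 ≤ N) : Real.logb 2 N - 2 ≤ expBits N := by
  set k := Nat.log 2 N with hk
  have hNpos : (0:ℝ) < N := by exact_mod_cast hN
  have hNsum : (N : ℝ) = ∑ i ∈ Finset.range (k+1), (binDigit N i : ℝ) * 2 ^ i := by
    have h := sum_binDigit N
    rw [← hk] at h
    have h2 := congrArg (fun x : ℕ => (x : ℝ)) h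
    push_cast at h2
    linarith [h2]
  have key : ((k:ℝ) - 1) * N ≤ ∑ i ∈ Finset.range (k+1), (i:ℝ) * (binDigit N i : ℝ) * 2 ^ i := by
    rw [hNsum, Finset.mul_sum, ← sub_nonneg, ← Finset.sum_sub_distrib]
    have e : ∀ i ∈ Finset.range (k+1),
        (i:ℝ) * (binDigit N i : ℝ) * 2 ^ i - ((k:ℝ) - 1) * ((binDigit N i : ℝ) * 2 ^ i)
        = -(((k:ℝ) - 1 - i) * (binDigit N i : ℝ) * 2 ^ i) := by intros; ring
    rw [Finset.sum_congr rfl e, Finset.sum_neg_distrib, neg_nonneg]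
    rw [Finset.sum_range_succ, binDigit_log N hN]
    have h1 : ∑ i ∈ Finset.range k, ((k:ℝ) - 1 - i) * (binDigit N i : ℝ) * 2 ^ i
        ≤ ∑ i ∈ Finset.range k, ((k:ℝ) - 1 - i) * 2 ^ i := by
      apply Finset.sum_le_sum
      intro i hi
      have hik : i < k := Finset.mem_range.mp hi
      have hc : (0:ℝ) ≤ (k:ℝ) - 1 - i := by
        have : (i:ℝ) ≤ (k:ℝ) - 1 := by
          have : (i:ℝ) + 1 ≤ (k:ℝ) := by exact_mod_cast hik
          linarith
        linarith
      have hb : (binDigit N i : ℝ) ≤ 1 := by exact_mod_cast binDigit_le_one N i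
      calc ((k:ℝ) - 1 - i) * (binDigit N i : ℝ) * 2 ^ i
          ≤ ((k:ℝ) - 1 - i) * 1 * 2 ^ i := by
            apply mul_le_mul_of_nonneg_right _ (by positivity)
            exact mul_le_mul_of_nonneg_left hb hc
        _ = ((k:ℝ) - 1 - i) * 2 ^ i := by ring
    have h2 := aux_sum_le k
    have h3 : ((k:ℝ) - 1 - k) * (1:ℕ) * 2 ^ k = -(2 ^ k) := by push_cast; ring
    rw [h3]
    linarith
  have hlogb : Real.logb 2 N - 2 ≤ (k:ℝ) - 1 := by
    have := logb_le_natlog N hN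
    rw [← hk] at this
    linarith
  have : (k:ℝ) - 1 ≤ expBits N := by
    rw [expBits, ← hk, one_div, ← div_eq_inv_mul, le_div_iff₀ hNpos]
    exact key
  linarith

lemma sum_freq {A : Type*} [Fintype A] [DecidableEq A] {n : ℕ} (u : Fin n → A) :
    ∑ a : A, freq u a = n := by
  unfold freq
  rw [← Finset.card_eq_sum_card_fiberwise (fun i _ => Finset.mem_univ (u i))]
  simp

lemma typeClassCard_le {A : Type*} [Fintype A] [DecidableEq A] {n : ℕ} (u : Fin n → A) :
    typeClassCard u ≤ n.factorial := Nat.div_le_self _ _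

lemma typeClassCard_inj {A : Type*} [Fintype A] [DecidableEq A] {n : ℕ} {u : Fin n → A}
    (h : Function.Injective u) : typeClassCard u = n.factorial := by
  have hfreq : ∀ a : A, freq u a ≤ 1 := by
    intro a
    apply Finset.card_le_one.mpr
    intro i hi j hj
    simp only [Finset.mem_filter] at hi hj
    exact h (hi.2.trans hj.2.symm)
  have hprod : ∏ a : A, (freq u a).factorial = 1 := by
    apply Finset.prod_eq_one
    intro a _
    have h01 : freq u a = 0 ∨ freq u a = 1 := by have := hfreq a; omega
    rcases h01 with h | h <;> simp [h]
  rw [typeClassCard, hprod, Nat.div_one]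

lemma expBits_le_logb (N M : ℕ) (hNM : N ≤ M) (hM : 1 ≤ M) :
    expBits N ≤ Real.logb 2 M := by
  rcases Nat.eq_zero_or_pos N with h | h
  · subst h
    have : expBits 0 = 0 := by simp [expBits]
    rw [this]
    exact Real.logb_nonneg (by norm_num) (by exact_mod_cast hM)
  · exact (expBits_le N h).trans
      (Real.logb_le_logb_of_le (by norm_num) (by exact_mod_cast h) (by exact_mod_cast hNM))

lemma sum_prod_pmf {A : Type*} [Fintype A] (μ : PMF A) (ι : Type*) [Fintype ι] [DecidableEq ι] :
    ∑ u : ι → A, ∏ i, (μ (u i)).toReal = 1 := by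
  have h1 : ∑ a : A, (μ a).toReal = 1 := by
    have h := μ.tsum_coe
    rw [tsum_fintype] at h
    have h2 : (∑ a : A, μ a).toReal = (1 : ℝ≥0∞).toReal := by rw [h]
    rw [ENNReal.toReal_sum (fun a _ => PMF.apply_ne_top μ a)] at h2
    simpa using h2
  calc ∑ u : ι → A, ∏ i, (μ (u i)).toReal
      = ∏ _i : ι, ∑ a : A, (μ a).toReal := (Fintype.prod_sum fun _ a => (μ a).toReal).symm
    _ = 1 := by simp [h1]

lemma pair_bound {A : Type*} [Fintype A] [Nonempty A] [DecidableEq A] (μ : PMF A) {n : ℕ}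
    (i j : Fin n) (hij : i ≠ j) :
    ∑ u ∈ Finset.univ.filter (fun u : Fin n → A => u i = u j), ∏ k, (μ (u k)).toReal
      ≤ Finset.univ.sup' Finset.univ_nonempty (fun a : A => (μ a).toReal) := by
  classical
  set f : A → ℝ := fun a => (μ a).toReal with hf
  set m := Finset.univ.sup' Finset.univ_nonempty f with hm
  have hf0 : ∀ a, 0 ≤ f a := fun a => ENNReal.toReal_nonneg
  have hm0 : 0 ≤ m := le_trans (hf0 (Classical.arbitrary A))
    (Finset.le_sup' f (Finset.mem_univ _))
  set S := Finset.univ.filter (fun u : Fin n → A => u i = u j) with hS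
  -- step 1: rewrite products splitting off index i
  have hsplit : ∀ u : Fin n → A, ∏ k, f (u k) = f (u i) * ∏ k ∈ Finset.univ.erase i, f (u k) :=
    fun u => (Finset.mul_prod_erase Finset.univ (fun k => f (u k)) (Finset.mem_univ i)).symm
  have hstep1 : ∀ u : Fin n → A, ∏ k, f (u k) ≤ m * ∏ k ∈ Finset.univ.erase i, f (u k) := by
    intro u
    rw [hsplit u]
    exact mul_le_mul_of_nonneg_right (Finset.le_sup' f (Finset.mem_univ (u i)))
      (Finset.prod_nonneg fun k _ => hf0 _)
  -- step 2
  have hsub : ∀ u : Fin n → A, ∏ k ∈ Finset.univ.erase i, f (u k)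
      = ∏ k : {k : Fin n // k ≠ i}, f (u k) := by
    intro u
    rw [← Finset.prod_subtype (Finset.univ.erase i) (fun k => by simp) (fun k => f (u k))]
  set Φ : (Fin n → A) → ({k : Fin n // k ≠ i} → A) := fun u k => u k with hΦ
  have hinj : Set.InjOn Φ S := by
    intro u hu v hv huv
    have hu2 : u i = u j := (Finset.mem_filter.mp hu).2
    have hv2 : v i = v j := (Finset.mem_filter.mp hv).2
    have hj' : (j : Fin n) ≠ i := fun h => hij h.symm
    have hjj : u j = v j := congrFun huv ⟨j, hj'⟩
    funext k
    by_cases hk : k = i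
    · rw [hk, hu2, hv2]; exact hjj
    · exact congrFun huv ⟨k, hk⟩
  have hstep2 : ∑ u ∈ S, ∏ k : {k : Fin n // k ≠ i}, f (u k) ≤ 1 := by
    have h1 : ∑ u ∈ S, ∏ k : {k : Fin n // k ≠ i}, f (u k)
        = ∑ v ∈ S.image Φ, ∏ k, f (v k) := by
      rw [Finset.sum_image (fun u hu v hv => hinj hu hv)]
    rw [h1]
    calc ∑ v ∈ S.image Φ, ∏ k, f (v k)
        ≤ ∑ v : {k : Fin n // k ≠ i} → A, ∏ k, f (v k) := by
          apply Finset.sum_le_sum_of_subset_of_nonneg (Finset.subset_univ _)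
          intro v _ _
          exact Finset.prod_nonneg fun k _ => hf0 _
      _ = 1 := sum_prod_pmf μ _
  calc ∑ u ∈ S, ∏ k, f (u k)
      ≤ ∑ u ∈ S, m * ∏ k ∈ Finset.univ.erase i, f (u k) :=
        Finset.sum_le_sum fun u _ => hstep1 u
    _ = m * ∑ u ∈ S, ∏ k : {k : Fin n // k ≠ i}, f (u k) := by
        rw [Finset.mul_sum]
        exact Finset.sum_congr rfl fun u _ => by rw [hsub u]
    _ ≤ m * 1 := mul_le_mul_of_nonneg_left hstep2 hm0
    _ = m := mul_one m

lemma gauss_real (n : ℕ) (hn : 1 ≤ n) :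
    ∑ j : Fin n, ((j : ℕ) : ℝ) = (n : ℝ) * ((n : ℝ) - 1) / 2 := by
  rw [Fin.sum_univ_eq_sum_range (fun i => (i : ℝ)) n]
  have h := Finset.sum_range_id_mul_two n
  have h2 := congrArg (fun x : ℕ => (x : ℝ)) h
  push_cast [Nat.cast_sub hn] at h2
  linarith [h2]


theorem stmt16 (A : Type*) [Fintype A] [Nonempty A] [DecidableEq A] (μ : PMF A)
    (n : ℕ) (hn : 1 < n)
    -- H∞(μ) is the min-entropy of μ, so that 2^(−H∞(μ)) = maxₐ μ(a)
    (Hinf : ℝ)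
    (hH : (2 : ℝ) ^ (-Hinf) = Finset.univ.sup' Finset.univ_nonempty fun a : A => (μ a).toReal) :
    (1 - ((n : ℝ) * (n - 1) / 2) * (2 : ℝ) ^ (-Hinf)) *
        ((Real.logb 2 (n.factorial) - 2) / n) ≤ rateL A μ n ∧
      rateL A μ n ≤ Real.logb 2 (n.factorial) / n := by
  classical
  rw [hH]
  have hn0 : (0:ℝ) < n := by
    have : 0 < n := by omega
    exact_mod_cast this
  set f : A → ℝ := fun a => (μ a).toReal with hf
  set m := Finset.univ.sup' Finset.univ_nonempty f with hm
  have hf0 : ∀ a, 0 ≤ f a := fun a => ENNReal.toReal_nonneg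
  have hP0 : ∀ u : Fin n → A, 0 ≤ ∏ i, f (u i) := fun u => Finset.prod_nonneg fun i _ => hf0 _
  have hm0 : 0 ≤ m := le_trans (hf0 (Classical.arbitrary A)) (Finset.le_sup' f (Finset.mem_univ _))
  have hm1 : m ≤ 1 := by
    apply Finset.sup'_le
    intro a _
    have h := PMF.coe_le_one μ a
    have h2 := ENNReal.toReal_mono (by simp) h
    simpa using h2
  have hfact1 : 1 ≤ n.factorial := Nat.one_le_iff_ne_zero.mpr (Nat.factorial_ne_zero n)
  -- upper bound
  have hub : rateL A μ n ≤ Real.logb 2 n.factorial / n := by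
    unfold rateL
    have h1 : ∑ u : Fin n → A, (∏ i, f (u i)) * expBits (typeClassCard u)
        ≤ ∑ u : Fin n → A, (∏ i, f (u i)) * Real.logb 2 n.factorial :=
      Finset.sum_le_sum fun u _ =>
        mul_le_mul_of_nonneg_left (expBits_le_logb _ _ (typeClassCard_le u) hfact1) (hP0 u)
    calc (1/(n:ℝ)) * ∑ u : Fin n → A, (∏ i, f (u i)) * expBits (typeClassCard u)
        ≤ (1/(n:ℝ)) * ∑ u : Fin n → A, (∏ i, f (u i)) * Real.logb 2 n.factorial :=
          mul_le_mul_of_nonneg_left h1 (by positivity)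
      _ = Real.logb 2 n.factorial / n := by
          rw [← Finset.sum_mul, sum_prod_pmf μ (Fin n), one_mul]
          ring
  have hL0 : 0 ≤ rateL A μ n := by
    unfold rateL
    apply mul_nonneg (by positivity)
    exact Finset.sum_nonneg fun u _ => mul_nonneg (hP0 u) (expBits_nonneg _)
  set Inj := Finset.univ.filter (fun u : Fin n → A => Function.Injective u) with hInj
  set PI := ∑ u ∈ Inj, ∏ i, f (u i) with hPI
  have hbad : ∑ u ∈ Finset.univ.filter (fun u : Fin n → A => ¬ Function.Injective u), ∏ k, f (u k)
      ≤ ((n:ℝ) * ((n:ℝ) - 1) / 2) * m := by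
    set g : (Fin n → A) → ℝ := fun u => ∑ j : Fin n, ∑ i ∈ Finset.Iio j,
      (if u i = u j then ∏ k, f (u k) else 0) with hg
    have hterm0 : ∀ (u : Fin n → A) (i j : Fin n),
        0 ≤ (if u i = u j then ∏ k, f (u k) else 0) := by
      intro u i j
      split
      · exact hP0 u
      · exact le_refl 0
    have hg0 : ∀ u, 0 ≤ g u :=
      fun u => Finset.sum_nonneg fun j _ => Finset.sum_nonneg fun i _ => hterm0 u i j
    have h1 : ∀ u ∈ Finset.univ.filter (fun u : Fin n → A => ¬ Function.Injective u),
        ∏ k, f (u k) ≤ g u := by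
      intro u hu
      have hni : ¬ Function.Injective u := (Finset.mem_filter.mp hu).2
      rw [Function.not_injective_iff] at hni
      obtain ⟨a, b, hab, hne⟩ := hni
      obtain ⟨i, j, hlt, hueq⟩ : ∃ i j : Fin n, i < j ∧ u i = u j := by
        rcases lt_or_gt_of_ne hne with h | h
        · exact ⟨a, b, h, hab⟩
        · exact ⟨b, a, h, hab.symm⟩
      have hinner : ∏ k, f (u k) ≤ ∑ i' ∈ Finset.Iio j,
          (if u i' = u j then ∏ k, f (u k) else 0) := by
        have h2 := Finset.single_le_sum (f := fun i' => if u i' = u j then ∏ k, f (u k) else 0)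
          (fun i' _ => hterm0 u i' j) (Finset.mem_Iio.mpr hlt)
        simpa [hueq] using h2
      calc ∏ k, f (u k) ≤ ∑ i' ∈ Finset.Iio j, (if u i' = u j then ∏ k, f (u k) else 0) := hinner
        _ ≤ g u := Finset.single_le_sum
            (f := fun j' => ∑ i' ∈ Finset.Iio j', (if u i' = u j' then ∏ k, f (u k) else 0))
            (fun j' _ => Finset.sum_nonneg fun i' _ => hterm0 u i' j') (Finset.mem_univ j)
    calc ∑ u ∈ Finset.univ.filter (fun u : Fin n → A => ¬ Function.Injective u), ∏ k, f (u k)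
        ≤ ∑ u ∈ Finset.univ.filter (fun u : Fin n → A => ¬ Function.Injective u), g u :=
          Finset.sum_le_sum h1
      _ ≤ ∑ u : Fin n → A, g u :=
          Finset.sum_le_sum_of_subset_of_nonneg (Finset.filter_subset _ _) fun u _ _ => hg0 u
      _ = ∑ j : Fin n, ∑ i ∈ Finset.Iio j, ∑ u : Fin n → A,
            (if u i = u j then ∏ k, f (u k) else 0) := by
          simp only [hg]
          rw [Finset.sum_comm]
          exact Finset.sum_congr rfl fun j _ => Finset.sum_comm
      _ ≤ ∑ j : Fin n, ∑ i ∈ Finset.Iio j, m := by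
          apply Finset.sum_le_sum
          intro j _
          apply Finset.sum_le_sum
          intro i hi
          have hij : i ≠ j := ne_of_lt (Finset.mem_Iio.mp hi)
          have h2 := pair_bound μ i j hij
          rw [Finset.sum_filter] at h2
          exact h2
      _ = ∑ j : Fin n, ((Finset.Iio j).card : ℝ) * m := by
          simp [Finset.sum_const, nsmul_eq_mul]
      _ = ((n:ℝ) * ((n:ℝ)-1)/2) * m := by
          rw [← Finset.sum_mul]
          congr 1
          simp only [Fin.card_Iio]
          exact gauss_real n (by omega)
  have hsplit : PI + ∑ u ∈ Finset.univ.filter (fun u : Fin n → A => ¬ Function.Injective u),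
      ∏ k, f (u k) = 1 := by
    rw [hPI, hInj, Finset.sum_filter_add_sum_filter_not]
    exact sum_prod_pmf μ (Fin n)
  have hPIc : 1 - ((n:ℝ) * ((n:ℝ)-1)/2) * m ≤ PI := by linarith
  have hrate : PI * ((Real.logb 2 n.factorial - 2) / n) ≤ rateL A μ n := by
    have h1 : ∑ u ∈ Inj, (∏ i, f (u i)) * (Real.logb 2 n.factorial - 2)
        ≤ ∑ u ∈ Inj, (∏ i, f (u i)) * expBits (typeClassCard u) := by
      apply Finset.sum_le_sum
      intro u hu
      have hinj : Function.Injective u := (Finset.mem_filter.mp hu).2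
      rw [typeClassCard_inj hinj]
      exact mul_le_mul_of_nonneg_left (le_expBits _ hfact1) (hP0 u)
    have h2 : ∑ u ∈ Inj, (∏ i, f (u i)) * expBits (typeClassCard u)
        ≤ ∑ u : Fin n → A, (∏ i, f (u i)) * expBits (typeClassCard u) :=
      Finset.sum_le_sum_of_subset_of_nonneg (Finset.filter_subset _ _)
        fun u _ _ => mul_nonneg (hP0 u) (expBits_nonneg _)
    have h3 : ∑ u ∈ Inj, (∏ i, f (u i)) * (Real.logb 2 n.factorial - 2)
        = PI * (Real.logb 2 n.factorial - 2) := by rw [hPI, ← Finset.sum_mul]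
    have h4 : PI * ((Real.logb 2 n.factorial - 2)/(n:ℝ))
        = (1/(n:ℝ)) * (PI * (Real.logb 2 n.factorial - 2)) := by ring
    unfold rateL
    rw [h4]
    apply mul_le_mul_of_nonneg_left _ (by positivity)
    rw [← h3]
    exact le_trans h1 h2
  refine ⟨?_, hub⟩
  by_cases hq : 0 ≤ (Real.logb 2 (n.factorial : ℕ) - 2) / (n:ℝ)
  · calc (1 - ((n:ℝ)*((n:ℝ)-1)/2) * m) * ((Real.logb 2 (n.factorial : ℕ) - 2)/(n:ℝ))
        ≤ PI * ((Real.logb 2 (n.factorial : ℕ) - 2)/(n:ℝ)) :=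
          mul_le_mul_of_nonneg_right hPIc hq
      _ ≤ rateL A μ n := hrate
  · push_neg at hq
    have hn2 : n = 2 := by
      by_contra hne
      have h3 : 3 ≤ n := by omega
      have h6 : (6:ℝ) ≤ (n.factorial : ℝ) := by
        have := Nat.factorial_le h3
        norm_num [Nat.factorial] at this ⊢
        exact_mod_cast this
      have hlog4 : (2:ℝ) ≤ Real.logb 2 (n.factorial : ℕ) := by
        have h4 : Real.logb 2 (4:ℝ) = 2 := by
          rw [show (4:ℝ) = 2^(2:ℕ) by norm_num, Real.logb_pow, Real.logb_self_eq_one] <;> norm_num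
        calc (2:ℝ) = Real.logb 2 4 := h4.symm
          _ ≤ Real.logb 2 ((n.factorial : ℕ) : ℝ) :=
              Real.logb_le_logb_of_le (by norm_num) (by norm_num) (by linarith)
      have : 0 ≤ (Real.logb 2 (n.factorial : ℕ) - 2)/(n:ℝ) :=
        div_nonneg (by linarith) hn0.le
      linarith
    subst hn2
    have hfac2 : ((Nat.factorial 2 : ℕ) : ℝ) = 2 := by norm_num [Nat.factorial]
    have hlogb2 : Real.logb 2 ((Nat.factorial 2 : ℕ) : ℝ) = 1 := by
      rw [hfac2, Real.logb_self_eq_one] <;> norm_num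
    have hc : 0 ≤ 1 - ((2:ℝ)*((2:ℝ)-1)/2)*m := by
      norm_num
      linarith
    have hq2 : (Real.logb 2 ((Nat.factorial 2 : ℕ) : ℝ) - 2)/((2:ℕ):ℝ) ≤ 0 := by
      rw [hlogb2]; norm_num
    refine le_trans ?_ hL0
    apply mul_nonpos_of_nonneg_of_nonpos
    · norm_num
      linarith
    · exact hq2
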